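/- Let k ≥ 2 be an integer, let i, j ∈ {0,1,…,k−1}, and let ℓ be an integer with max(0, i+j+1−k) ≤ ℓ, ℓ ≤ i and ℓ ≤ j−1. Then the number of permutations π of {1,…,k} with N_π(i,j) = ℓ, π(i+1) ≤ j, and π⁻¹(j+1) ≥ i+2 equals i!·j!·(k−i−1)!·(k−j−1)! / ((i−ℓ)!·(j−ℓ−1)!·(k+ℓ−i−j−1)!·ℓ!). -/

import Mathlib

open Nat Finset

/-- `Nperm k π i j` is the number of `m ∈ {1,…,k}` with `m ≤ i` and `π(m) ≤ j`,
where the permutation `π` of `{1,…,k}` is represented 0-indexed on `Fin k`. -/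
def Nperm (k : ℕ) (π : Equiv.Perm (Fin k)) (i j : ℕ) : ℕ :=
  (Finset.univ.filter fun m : Fin k => (m : ℕ) < i ∧ ((π m : ℕ) < j)).card



open Nat Finset Equiv

variable {α : Type*} [Fintype α] [DecidableEq α]

/-- restriction of a permutation to a finset, as an embedding -/
def restr (s : Finset α) (π : Equiv.Perm α) : ↥s ↪ α :=
  ⟨fun x => π x, fun a b h => Subtype.ext (π.injective h)⟩

lemma exists_perm_extend (s : Finset α) (f : ↥s ↪ α) :
    ∃ π : Equiv.Perm α, ∀ x : ↥s, π x = f x := by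
  classical
  have hcard : Fintype.card {x // ¬ (x ∈ s)} = Fintype.card {x // ¬ ∃ y : ↥s, f y = x} := by
    have h1 : Fintype.card {x // (x : α) ∈ s} = Fintype.card {x // ∃ y : ↥s, f y = x} := by
      refine Fintype.card_congr ?_
      refine (Equiv.ofInjective f f.injective).trans ?_
      exact Equiv.setCongr rfl
    have := Fintype.card_subtype_compl (fun x => (x : α) ∈ s)
    have := Fintype.card_subtype_compl (fun x => ∃ y : ↥s, f y = x)
    omega
  obtain ⟨e₂⟩ := Fintype.card_eq.mp hcard
  refine ⟨(Equiv.sumCompl (· ∈ s)).symm.trans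
    ((((Equiv.ofInjective f f.injective).trans (Equiv.setCongr rfl)).sumCongr e₂).trans
    (Equiv.sumCompl (fun x => ∃ y : ↥s, f y = x))), ?_⟩
  intro x
  simp only [Equiv.trans_apply, Equiv.sumCompl_symm_apply_of_pos (p := fun x => x ∈ s) x.2,
    Equiv.sumCongr_apply, Sum.map_inl, Equiv.sumCompl_apply_inl]
  rfl

lemma card_perm_fixing (s : Finset α) :
    (univ.filter fun π : Equiv.Perm α => ∀ x ∈ s, π x = x).card
      = (Fintype.card α - s.card)! := by
  classical
  have : (univ.filter fun π : Equiv.Perm α => ∀ x ∈ s, π x = x).card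
      = Fintype.card {π : Equiv.Perm α // ∀ a, ¬ (a ∉ s) → π a = a} := by
    rw [Fintype.card_subtype]
    congr 1
    apply filter_congr
    intro π _
    constructor
    · intro h a ha; exact h a (not_not.mp ha)
    · intro h a ha; exact h a (not_not_intro ha)
  rw [this, ← Fintype.card_congr (Equiv.Perm.subtypeEquivSubtypePerm (fun a => a ∉ s)),
    Fintype.card_perm, Fintype.card_subtype_compl, Fintype.card_coe]

lemma card_perm_restrict_eq (s : Finset α) (f : ↥s ↪ α) :
    (univ.filter fun π : Equiv.Perm α => restr s π = f).card
      = (Fintype.card α - s.card)! := by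
  classical
  obtain ⟨σ₀, hσ₀⟩ := exists_perm_extend s f
  rw [← card_perm_fixing s]
  apply Finset.card_bij' (fun π _ => σ₀⁻¹ * π) (fun τ _ => σ₀ * τ)
  · intro π hπ
    simp only [mem_filter, mem_univ, true_and] at hπ ⊢
    intro x hx
    have : π x = f ⟨x, hx⟩ := congrFun (congrArg (fun (g : ↥s ↪ α) => ⇑g) hπ) ⟨x, hx⟩
    simp [Equiv.Perm.mul_apply, this, ← hσ₀ ⟨x, hx⟩]
  · intro τ hτ
    simp only [mem_filter, mem_univ, true_and] at hτ ⊢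
    ext x
    simp only [restr, Function.Embedding.coeFn_mk, Equiv.Perm.mul_apply, hτ x x.2, hσ₀ x]
  · intro π _; simp
  · intro τ _; simp

lemma card_embedding_two_blocks (b1 b2 t1 t2 : Finset α)
    (hb : Disjoint b1 b2) (ht : Disjoint t1 t2) :
    Fintype.card {f : ↥(b1 ∪ b2) ↪ α //
        (∀ x : ↥(b1 ∪ b2), (x:α) ∈ b1 → f x ∈ t1) ∧ (∀ x : ↥(b1 ∪ b2), (x:α) ∈ b2 → f x ∈ t2)}
      = t1.card.descFactorial b1.card * t2.card.descFactorial b2.card := by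
  classical
  have key : {f : ↥(b1 ∪ b2) ↪ α //
        (∀ x : ↥(b1 ∪ b2), (x:α) ∈ b1 → f x ∈ t1) ∧ (∀ x : ↥(b1 ∪ b2), (x:α) ∈ b2 → f x ∈ t2)}
      ≃ (↥b1 ↪ ↥t1) × (↥b2 ↪ ↥t2) := by
    refine ⟨fun F => (⟨fun x => ⟨F.1 ⟨x, mem_union_left _ x.2⟩, F.2.1 _ x.2⟩, ?_⟩,
        ⟨fun x => ⟨F.1 ⟨x, mem_union_right _ x.2⟩, F.2.2 _ x.2⟩, ?_⟩),
      fun G => ⟨⟨fun x => if h : (x:α) ∈ b1 then G.1 ⟨x, h⟩ else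
        G.2 ⟨x, (mem_union.mp x.2).resolve_left h⟩, ?_⟩, ?_, ?_⟩, ?_, ?_⟩
    · intro a b h
      have := F.1.injective (Subtype.ext_iff.mp h)
      apply Subtype.ext
      exact Subtype.mk_eq_mk.mp this
    · intro a b h
      have := F.1.injective (Subtype.ext_iff.mp h)
      apply Subtype.ext
      exact Subtype.mk_eq_mk.mp this
    · intro a b h
      by_cases ha : (a:α) ∈ b1 <;> by_cases hb' : (b:α) ∈ b1 <;>
        simp only [ha, hb', dif_pos, dif_neg, not_false_iff] at h
      · have := G.1.injective (Subtype.ext h)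
        apply Subtype.ext
        exact Subtype.mk_eq_mk.mp this
      · exfalso
        have h1 := (G.1 ⟨a, ha⟩).2
        rw [h] at h1
        exact Finset.disjoint_left.mp ht h1 (G.2 _).2
      · exfalso
        have h1 := (G.1 ⟨b, hb'⟩).2
        rw [← h] at h1
        exact Finset.disjoint_left.mp ht h1 (G.2 _).2
      · have := G.2.injective (Subtype.ext h)
        apply Subtype.ext
        exact Subtype.mk_eq_mk.mp this
    · intro x hx
      show (if h : (x:α) ∈ b1 then _ else _) ∈ t1
      rw [dif_pos hx]
      exact (G.1 _).2
    · intro x hx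
      have hx1 : (x:α) ∉ b1 := fun h => Finset.disjoint_left.mp hb h hx
      show (if h : (x:α) ∈ b1 then _ else _) ∈ t2
      rw [dif_neg hx1]
      exact (G.2 _).2
    · intro F
      apply Subtype.ext
      apply Function.Embedding.ext
      intro x
      simp only [Function.Embedding.coeFn_mk]
      by_cases hx : (x:α) ∈ b1
      · rw [dif_pos hx]; rfl
      · rw [dif_neg hx]; rfl
    · intro G
      apply Prod.ext
      · apply Function.Embedding.ext
        intro x
        apply Subtype.ext
        show (if h : ((x:α)) ∈ b1 then _ else _) = _
        rw [dif_pos x.2]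
      · apply Function.Embedding.ext
        intro x
        apply Subtype.ext
        have hx1 : (x:α) ∉ b1 := fun h => Finset.disjoint_left.mp hb h x.2
        show (if h : ((x:α)) ∈ b1 then _ else _) = _
        rw [dif_neg hx1]
  rw [Fintype.card_congr key, Fintype.card_prod, Fintype.card_embedding_eq,
    Fintype.card_embedding_eq, Fintype.card_coe, Fintype.card_coe, Fintype.card_coe,
    Fintype.card_coe]

lemma card_perm_two_blocks (b1 b2 t1 t2 : Finset α)
    (hb : Disjoint b1 b2) (ht : Disjoint t1 t2) :
    (univ.filter fun π : Equiv.Perm α => (∀ x ∈ b1, π x ∈ t1) ∧ (∀ x ∈ b2, π x ∈ t2)).card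
      = t1.card.descFactorial b1.card * t2.card.descFactorial b2.card
        * (Fintype.card α - (b1 ∪ b2).card)! := by
  classical
  set s := b1 ∪ b2 with hs
  set D : (↥s ↪ α) → Prop := fun f =>
    (∀ x : ↥s, (x:α) ∈ b1 → f x ∈ t1) ∧ (∀ x : ↥s, (x:α) ∈ b2 → f x ∈ t2) with hD
  have hiff : ∀ π : Equiv.Perm α,
      ((∀ x ∈ b1, π x ∈ t1) ∧ (∀ x ∈ b2, π x ∈ t2)) ↔ D (restr s π) := by
    intro π
    constructor
    · rintro ⟨h1, h2⟩
      exact ⟨fun x hx => h1 x hx, fun x hx => h2 x hx⟩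
    · rintro ⟨h1, h2⟩
      refine ⟨fun x hx => h1 ⟨x, mem_union_left _ hx⟩ hx, fun x hx => h2 ⟨x, mem_union_right _ hx⟩ hx⟩
  have hmaps : ∀ π ∈ (univ.filter fun π : Equiv.Perm α =>
      (∀ x ∈ b1, π x ∈ t1) ∧ (∀ x ∈ b2, π x ∈ t2)), restr s π ∈ univ.filter D := by
    intro π hπ
    simp only [mem_filter, mem_univ, true_and] at hπ ⊢
    exact (hiff π).mp hπ
  rw [Finset.card_eq_sum_card_fiberwise hmaps]
  have hfib : ∀ f ∈ univ.filter D,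
      ((univ.filter fun π : Equiv.Perm α => (∀ x ∈ b1, π x ∈ t1) ∧ (∀ x ∈ b2, π x ∈ t2)).filter
        fun π => restr s π = f).card = (Fintype.card α - s.card)! := by
    intro f hf
    simp only [mem_filter, mem_univ, true_and] at hf
    rw [← card_perm_restrict_eq s f]
    congr 1
    ext π
    simp only [mem_filter, mem_univ, true_and]
    constructor
    · rintro ⟨_, h⟩; exact h
    · intro h
      refine ⟨(hiff π).mpr ?_, h⟩
      rw [h]; exact hf
  rw [Finset.sum_congr rfl hfib, Finset.sum_const, smul_eq_mul]
  have hcardD : (univ.filter D).card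
      = t1.card.descFactorial b1.card * t2.card.descFactorial b2.card := by
    rw [← card_embedding_two_blocks b1 b2 t1 t2 hb ht, Fintype.card_subtype]
  rw [hcardD]

lemma fin_filter_lt_card (k n : ℕ) (h : n ≤ k) :
    (univ.filter fun m : Fin k => (m : ℕ) < n).card = n := by
  have heq : (univ.filter fun m : Fin k => (m : ℕ) < n) = Finset.map (Fin.castLEEmb h) univ := by
    ext x
    simp only [mem_filter, mem_univ, true_and, Finset.mem_map]
    constructor
    · intro hx
      exact ⟨⟨(x : ℕ), hx⟩, Fin.ext rfl⟩
    · rintro ⟨a, rfl⟩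
      simpa using a.2
  rw [heq, Finset.card_map, Finset.card_univ, Fintype.card_fin]


/-- Count of permutations `π` of `{1,…,k}` with `N_π(i,j) = ℓ`, `π(i+1) ≤ j` and
`π⁻¹(j+1) ≥ i+2` (0-indexed: `π(i) < j` and `π⁻¹(j) ≥ i+1` on `Fin k`). -/
theorem stmt_7 (k i j ℓ : ℕ) (hk : 2 ≤ k) (hik : i < k) (hjk : j < k)
    (hℓ1 : i + j + 1 ≤ k + ℓ) (hℓ2 : ℓ ≤ i) (hℓ3 : ℓ + 1 ≤ j) :
    ((Finset.univ.filter fun π : Equiv.Perm (Fin k) =>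
        Nperm k π i j = ℓ ∧ ((π ⟨i, hik⟩ : ℕ) < j) ∧ (i + 1 ≤ (π.symm ⟨j, hjk⟩ : ℕ))).card : ℝ) =
      ((i ! : ℝ) * (j !) * ((k - i - 1)!) * ((k - j - 1)!)) /
        (((i - ℓ)! : ℝ) * ((j - ℓ - 1)!) * ((k + ℓ - i - j - 1)!) * (ℓ !)) := by
  classical
  set ii : Fin k := ⟨i, hik⟩ with hii
  set jj : Fin k := ⟨j, hjk⟩ with hjj
  set posLT : Finset (Fin k) := univ.filter (fun m : Fin k => (m : ℕ) < i) with hposLT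
  set V1 : Finset (Fin k) := univ.filter (fun v : Fin k => (v : ℕ) < j) with hV1
  set V2 : Finset (Fin k) := univ.filter (fun v : Fin k => j < (v : ℕ)) with hV2
  have hposcard : posLT.card = i := fin_filter_lt_card k i hik.le
  have hV1card : V1.card = j := fin_filter_lt_card k j hjk.le
  have hV2card : V2.card = k - (j + 1) := by
    have h1 : (univ.filter fun v : Fin k => (v : ℕ) < j + 1).card = j + 1 :=
      fin_filter_lt_card k (j + 1) hjk
    have h2 := Finset.card_filter_add_card_filter_not
      (s := (univ : Finset (Fin k))) (p := fun v : Fin k => (v : ℕ) < j + 1)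
    rw [Finset.card_univ, Fintype.card_fin] at h2
    have h3 : (univ.filter fun v : Fin k => ¬ ((v : ℕ) < j + 1)) = V2 := by
      rw [hV2]
      apply filter_congr
      intro v _
      simp only [not_lt]
      omega
    rw [h1, h3] at h2
    omega
  -- the fiber map
  set Aset : Equiv.Perm (Fin k) → Finset (Fin k) :=
    fun π => univ.filter (fun m : Fin k => (m : ℕ) < i ∧ ((π m : ℕ) < j)) with hAset
  set S : Finset (Equiv.Perm (Fin k)) := univ.filter fun π : Equiv.Perm (Fin k) =>
      Nperm k π i j = ℓ ∧ ((π ii : ℕ) < j) ∧ (i + 1 ≤ (π.symm jj : ℕ)) with hS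
  have hmaps : ∀ π ∈ S, Aset π ∈ Finset.powersetCard ℓ posLT := by
    intro π hπ
    simp only [hS, mem_filter, mem_univ, true_and] at hπ
    rw [Finset.mem_powersetCard]
    constructor
    · intro m hm
      simp only [hAset, mem_filter, mem_univ, true_and] at hm
      simp only [hposLT, mem_filter, mem_univ, true_and]
      exact hm.1
    · exact hπ.1
  have hkey : ∀ A ∈ Finset.powersetCard ℓ posLT,
      (S.filter fun π => Aset π = A).card
        = j.descFactorial (ℓ + 1) * (k - (j + 1)).descFactorial (i - ℓ) * (k - (i + 1))! := by
    intro A hA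
    rw [Finset.mem_powersetCard] at hA
    obtain ⟨hA1, hA2⟩ := hA
    have hiA : ii ∉ A := by
      intro h
      have := hA1 h
      simp only [hposLT, mem_filter, mem_univ, true_and, hii] at this
      omega
    have hiPos : ii ∉ posLT := by
      simp only [hposLT, mem_filter, mem_univ, true_and, hii]
      omega
    -- rewrite the fiber as a two-blocks set
    have hset : (S.filter fun π => Aset π = A)
        = univ.filter fun π : Equiv.Perm (Fin k) =>
            (∀ x ∈ insert ii A, π x ∈ V1) ∧ (∀ x ∈ posLT \ A, π x ∈ V2) := by
      ext π
      simp only [hS, mem_filter, mem_univ, true_and]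
      constructor
      · rintro ⟨⟨hN, hi, hj⟩, hAeq⟩
        constructor
        · intro x hx
          rcases Finset.mem_insert.mp hx with rfl | hx
          · simp only [hV1, mem_filter, mem_univ, true_and]; exact hi
          · rw [← hAeq] at hx
            simp only [hAset, mem_filter, mem_univ, true_and] at hx
            simp only [hV1, mem_filter, mem_univ, true_and]
            exact hx.2
        · intro x hx
          rw [Finset.mem_sdiff, ← hAeq] at hx
          obtain ⟨hx1, hx2⟩ := hx
          simp only [hposLT, mem_filter, mem_univ, true_and] at hx1
          simp only [hAset, mem_filter, mem_univ, true_and] at hx2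
          have hge : j ≤ ((π x : Fin k) : ℕ) := by
            by_contra hlt
            exact hx2 ⟨hx1, by omega⟩
          have hne : ((π x : Fin k) : ℕ) ≠ j := by
            intro he
            have : π x = jj := Fin.ext he
            have : x = π.symm jj := by rw [← this, Equiv.symm_apply_apply]
            rw [← this] at hj
            omega
          simp only [hV2, mem_filter, mem_univ, true_and]
          omega
      · rintro ⟨h1, h2⟩
        have hAeq : Aset π = A := by
          ext m
          simp only [hAset, mem_filter, mem_univ, true_and]
          constructor
          · rintro ⟨hm1, hm2⟩
            by_contra hmA0
            have : m ∈ posLT \ A := by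
              rw [Finset.mem_sdiff]
              exact ⟨by simp only [hposLT, mem_filter, mem_univ, true_and]; exact hm1, hmA0⟩
            have := h2 m this
            simp only [hV2, mem_filter, mem_univ, true_and] at this
            omega
          · intro hm
            have hm1 := hA1 hm
            simp only [hposLT, mem_filter, mem_univ, true_and] at hm1
            have := h1 m (Finset.mem_insert_of_mem hm)
            simp only [hV1, mem_filter, mem_univ, true_and] at this
            exact ⟨hm1, this⟩
        refine ⟨⟨?_, ?_, ?_⟩, hAeq⟩
        · show (Aset π).card = ℓ
          rw [hAeq, hA2]
        · have := h1 ii (Finset.mem_insert_self _ _)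
          simp only [hV1, mem_filter, mem_univ, true_and] at this
          exact this
        · by_contra hcon
          push_neg at hcon
          set m : Fin k := π.symm jj with hm
          have hπm : π m = jj := Equiv.apply_symm_apply _ _
          have hmv : (m : ℕ) ≤ i := by omega
          rcases eq_or_lt_of_le hmv with he | hlt
          · have : m = ii := Fin.ext he
            rw [this] at hπm
            have := h1 ii (Finset.mem_insert_self _ _)
            simp only [hV1, mem_filter, mem_univ, true_and, hπm, hjj] at this
            omega
          · by_cases hmA : m ∈ A
            · have := h1 m (Finset.mem_insert_of_mem hmA)
              simp only [hV1, mem_filter, mem_univ, true_and, hπm, hjj] at this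
              omega
            · have : m ∈ posLT \ A := by
                rw [Finset.mem_sdiff]
                exact ⟨by simp only [hposLT, mem_filter, mem_univ, true_and]; omega, hmA⟩
              have := h2 m this
              simp only [hV2, mem_filter, mem_univ, true_and, hπm, hjj] at this
              omega
    rw [hset]
    have hbdisj : Disjoint (insert ii A) (posLT \ A) := by
      rw [Finset.disjoint_left]
      intro x hx hx2
      rw [Finset.mem_sdiff] at hx2
      rcases Finset.mem_insert.mp hx with rfl | hx
      · exact hiPos hx2.1
      · exact hx2.2 hx
    have htdisj : Disjoint V1 V2 := by
      rw [Finset.disjoint_left]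
      intro x hx hx2
      simp only [hV1, hV2, mem_filter, mem_univ, true_and] at hx hx2
      omega
    have h2b := card_perm_two_blocks (insert ii A) (posLT \ A) V1 V2 hbdisj htdisj
    have hub : insert ii A ∪ (posLT \ A) = insert ii posLT := by
      ext x
      simp only [Finset.mem_union, Finset.mem_insert, Finset.mem_sdiff]
      constructor
      · rintro (h | h)
        · rcases h with rfl | h
          · exact Or.inl rfl
          · exact Or.inr (hA1 h)
        · exact Or.inr h.1
      · rintro (rfl | h)
        · exact Or.inl (Or.inl rfl)
        · by_cases hx : x ∈ A
          · exact Or.inl (Or.inr hx)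
          · exact Or.inr ⟨h, hx⟩
    rw [hub, Finset.card_insert_of_notMem hiA, Finset.card_insert_of_notMem hiPos,
      Finset.card_sdiff_of_subset hA1, hposcard, hA2, hV1card, hV2card, Fintype.card_fin] at h2b
    convert h2b using 2
    congr!
  rw [hS] at hmaps ⊢
  rw [Finset.card_eq_sum_card_fiberwise hmaps]
  have := Finset.sum_congr rfl (fun A hA => hkey A hA)
  rw [hS] at this
  rw [this, Finset.sum_const, smul_eq_mul, Finset.card_powersetCard, hposcard]
  -- now pure arithmetic
  have hd1 : j.descFactorial (ℓ + 1) * (j - ℓ - 1)! = j ! := by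
    have := Nat.factorial_mul_descFactorial (n := j) (k := ℓ + 1) hℓ3
    rw [show j - (ℓ + 1) = j - ℓ - 1 by omega] at this
    rw [mul_comm] at this
    exact this
  have hd2 : (k - (j + 1)).descFactorial (i - ℓ) * (k + ℓ - i - j - 1)! = (k - j - 1)! := by
    have hle : i - ℓ ≤ k - (j + 1) := by omega
    have := Nat.factorial_mul_descFactorial (n := k - (j + 1)) (k := i - ℓ) hle
    rw [show k - (j + 1) - (i - ℓ) = k + ℓ - i - j - 1 by omega] at this
    rw [mul_comm] at this
    rw [show k - (j + 1) = k - j - 1 by omega] at this ⊢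
    exact this
  have hch : i.choose ℓ * ℓ ! * (i - ℓ)! = i ! := Nat.choose_mul_factorial_mul_factorial hℓ2
  have hnat : (i.choose ℓ * (j.descFactorial (ℓ + 1) * (k - (j + 1)).descFactorial (i - ℓ)
        * (k - (i + 1))!)) * ((i - ℓ)! * (j - ℓ - 1)! * (k + ℓ - i - j - 1)! * ℓ !)
      = i ! * j ! * (k - i - 1)! * (k - j - 1)! := by
    calc (i.choose ℓ * (j.descFactorial (ℓ + 1) * (k - (j + 1)).descFactorial (i - ℓ)
        * (k - (i + 1))!)) * ((i - ℓ)! * (j - ℓ - 1)! * (k + ℓ - i - j - 1)! * ℓ !)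
        = (i.choose ℓ * ℓ ! * (i - ℓ)!) * (j.descFactorial (ℓ + 1) * (j - ℓ - 1)!)
          * ((k - (j + 1)).descFactorial (i - ℓ) * (k + ℓ - i - j - 1)!) * (k - (i + 1))! := by
          ring
      _ = i ! * j ! * (k - j - 1)! * (k - (i + 1))! := by rw [hd1, hd2, hch]
      _ = i ! * j ! * (k - i - 1)! * (k - j - 1)! := by
          rw [show k - (i + 1) = k - i - 1 by omega]; ring
  have hden : ((i - ℓ)! : ℝ) * (j - ℓ - 1)! * (k + ℓ - i - j - 1)! * ℓ ! ≠ 0 := by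
    positivity
  rw [eq_div_iff hden]
  push_cast
  exact_mod_cast congrArg (Nat.cast : ℕ → ℝ) hnat
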